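/- Given a quantified formula ∃X[F(X,Y)], let C be a clause of F that is blocked in F at a variable w ∈ X with respect to Y. Then F \ {C} es-implies C with respect to Y; in particular, ∃X[F] ≡ ∃X[F \ {C}], i.e., for every full assignment y to Y, F|_y is satisfiable if and only if (F \ {C})|_y is satisfiable. -/
import Mathlib


open scoped Classical

noncomputable section

/-- A clause: a finite set of literals `(variable, polarity)`. -/
abbrev Clause (V : Type) : Type := Finset (V × Bool)

/-- A CNF formula: a finite set of clauses. -/
abbrev CNF (V : Type) : Type := Finset (Finset (V × Bool))

/-- A full assignment `α` satisfies a clause if it satisfies some literal of it. -/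
def satClause {V : Type} (α : V → Bool) (C : Clause V) : Prop := ∃ l ∈ C, α l.1 = l.2

/-- A full assignment satisfies a formula if it satisfies every clause of it. -/
def satCNF {V : Type} (α : V → Bool) (F : CNF V) : Prop := ∀ C ∈ F, satClause α C

/-- A formula is satisfiable if some full assignment satisfies it. -/
def satisfiable {V : Type} (F : CNF V) : Prop := ∃ α : V → Bool, satCNF α F

/-- A partial assignment (`none` = unassigned) satisfies a clause if it satisfies
some literal of it. -/
def pSatClause {V : Type} (q : V → Option Bool) (C : Clause V) : Prop :=
  ∃ l ∈ C, q l.1 = some l.2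

/-- Cofactor of a clause under a partial assignment: delete the falsified literals. -/
def cofClause {V : Type} (q : V → Option Bool) (C : Clause V) : Clause V :=
  C.filter fun l => q l.1 ≠ some (!l.2)

/-- Cofactor of a formula under a partial assignment: remove the satisfied clauses and
delete the falsified literals from the remaining clauses. -/
def cofCNF {V : Type} (q : V → Option Bool) (F : CNF V) : CNF V :=
  (F.filter fun C => ¬ pSatClause q C).image (cofClause q)

/-- The partial assignment induced by a full assignment `y` on the set `Y`. -/
def restrict {V : Type} (Y : Set V) (y : V → Bool) : V → Option Bool :=
  fun v => if v ∈ Y then some (y v) else none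

/-- `F` es-implies `G` with respect to `Y`: for every full assignment `y` to `Y`,
`(F ∧ G)|_y` and `F|_y` are equisatisfiable. -/
def esImplies {V : Type} (Y : Set V) (F G : CNF V) : Prop :=
  ∀ y : V → Bool,
    satisfiable (cofCNF (restrict Y y) (F ∪ G)) ↔ satisfiable (cofCNF (restrict Y y) F)

/-- Two clauses are resolvable on `w`: they have opposite literals of `w` and
opposite literals of no other variable. -/
def resolvable {V : Type} (w : V) (C1 C2 : Clause V) : Prop :=
  (∃ b : Bool, (w, b) ∈ C1 ∧ (w, !b) ∈ C2) ∧
  ∀ (v : V) (b : Bool), v ≠ w → ¬ ((v, b) ∈ C1 ∧ (v, !b) ∈ C2)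

/-- The partial assignment mapping `w` to `b` and leaving everything else unassigned. -/
def singleAsn {V : Type} (w : V) (b : Bool) : V → Option Bool :=
  fun v => if v = w then some b else none

/-- `C ∈ F` containing the literal `(w, b)` is blocked in `F` at `w` with respect to `Y`:
letting `G` be the set of clauses of `F` resolvable with `C` on `w`, the formula
`(F \ G)|_{w:=b}` es-implies `G|_{w:=b}` with respect to `Y`. -/
def blocked {V : Type} (Y : Set V) (F : CNF V) (C : Clause V) (w : V) (b : Bool) : Prop :=
  C ∈ F ∧ (w, b) ∈ C ∧
  esImplies Y
    (cofCNF (singleAsn w b) (F \ F.filter fun D => resolvable w C D))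
    (cofCNF (singleAsn w b) (F.filter fun D => resolvable w C D))

def Extends {V : Type} (q : V → Option Bool) (β : V → Bool) : Prop :=
  ∀ v c, q v = some c → β v = c

lemma satCNF_cofCNF {V : Type} {q : V → Option Bool} {β : V → Bool}
    (hext : Extends q β) {F : CNF V} (h : satCNF β F) : satCNF β (cofCNF q F) := by
  intro D hD
  simp only [cofCNF, Finset.mem_image, Finset.mem_filter] at hD
  obtain ⟨E, ⟨hE, _⟩, rfl⟩ := hD
  obtain ⟨l, hl, hsat⟩ := h E hE
  refine ⟨l, ?_, hsat⟩
  simp only [cofClause, Finset.mem_filter]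
  refine ⟨hl, fun hq => ?_⟩
  have := hext _ _ hq
  rw [hsat] at this
  simp at this

lemma override_sat {V : Type} {q : V → Option Bool} {α : V → Bool} {F : CNF V}
    (h : satCNF α (cofCNF q F)) :
    Extends q (fun v => (q v).getD (α v)) ∧ satCNF (fun v => (q v).getD (α v)) F := by
  constructor
  · intro v c hv; simp [hv]
  · intro D hD
    by_cases hp : pSatClause q D
    · obtain ⟨l, hl, hq⟩ := hp
      exact ⟨l, hl, by simp [hq]⟩
    · have hm : cofClause q D ∈ cofCNF q F := by
        simp only [cofCNF, Finset.mem_image, Finset.mem_filter]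
        exact ⟨D, ⟨hD, hp⟩, rfl⟩
      obtain ⟨l, hl, hsat⟩ := h _ hm
      simp only [cofClause, Finset.mem_filter] at hl
      refine ⟨l, hl.1, ?_⟩
      rcases hq : q l.1 with _ | c
      · simpa [hq] using hsat
      · have : c = l.2 := by
          have := hl.2
          rw [hq] at this
          rcases c with _ | _ <;> rcases hc : l.2 with _ | _ <;> simp_all
        simp [hq, this]

lemma sat_cof_iff {V : Type} {q : V → Option Bool} {F : CNF V} :
    satisfiable (cofCNF q F) ↔ ∃ β, Extends q β ∧ satCNF β F := by
  constructor
  · rintro ⟨α, hα⟩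
    obtain ⟨h1, h2⟩ := override_sat hα
    exact ⟨_, h1, h2⟩
  · rintro ⟨β, h1, h2⟩
    exact ⟨β, satCNF_cofCNF h1 h2⟩

lemma sat_cof_cof_iff {V : Type} {q r : V → Option Bool}
    (hdisj : ∀ v, q v = none ∨ r v = none) {F : CNF V} :
    satisfiable (cofCNF q (cofCNF r F)) ↔
      ∃ γ, Extends q γ ∧ Extends r γ ∧ satCNF γ F := by
  rw [sat_cof_iff]
  constructor
  · rintro ⟨β, hq, hsat⟩
    obtain ⟨h1, h2⟩ := override_sat (q := r) (α := β) (hsat ·)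
    refine ⟨_, ?_, h1, h2⟩
    intro v c hv
    rcases hdisj v with h | h
    · rw [hv] at h; exact absurd h (by simp)
    · simpa [h] using hq v c hv
  · rintro ⟨γ, h1, h2, h3⟩
    exact ⟨γ, h1, satCNF_cofCNF h2 h3⟩

lemma cofCNF_union {V : Type} (q : V → Option Bool) (A B : CNF V) :
    cofCNF q (A ∪ B) = cofCNF q A ∪ cofCNF q B := by
  simp [cofCNF, Finset.filter_union, Finset.image_union]

/-- Given `∃X[F(X,Y)]` with `X, Y` partitioning the variables, if a clause
`C` of `F` is blocked in `F` at `w ∈ X` with respect to `Y`, then `F \ {C}` es-implies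
`C` with respect to `Y`; in particular `∃X[F] ≡ ∃X[F \ {C}]` (for every full assignment
`y` to `Y`, `F|_y` is satisfiable iff `(F \ {C})|_y` is satisfiable). -/
theorem stmt_1 (V : Type) (X Y : Set V) (hpart : X = Yᶜ)
    (F : CNF V) (C : Clause V) (w : V) (b : Bool)
    (hC : C ∈ F) (hw : w ∈ X) (hblk : blocked Y F C w b) :
    esImplies Y (F.erase C) {C} ∧
    ∀ y : V → Bool,
      satisfiable (cofCNF (restrict Y y) F) ↔
        satisfiable (cofCNF (restrict Y y) (F.erase C)) := by
    classical
    have hwY : w ∉ Y := by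
      rw [hpart] at hw; exact hw
    set G : CNF V := F.filter (fun D => resolvable w C D) with hG
    obtain ⟨_, hwbC, hes⟩ := hblk
    have key : ∀ y : V → Bool,
        satisfiable (cofCNF (restrict Y y) F) ↔
          satisfiable (cofCNF (restrict Y y) (F.erase C)) := by
      intro y
      constructor
      · rw [sat_cof_iff, sat_cof_iff]
        rintro ⟨β, h1, h2⟩
        exact ⟨β, h1, fun D hD => h2 D (Finset.mem_of_mem_erase hD)⟩
      · rw [sat_cof_iff (F := F.erase C)]
        rintro ⟨β, hext, hsat⟩
        by_cases hsC : satClause β C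
        · rw [sat_cof_iff]
          refine ⟨β, hext, fun D hD => ?_⟩
          by_cases hDC : D = C
          · exact hDC ▸ hsC
          · exact hsat D (Finset.mem_erase.2 ⟨hDC, hD⟩)
        · -- flip β at w
          have hβw : β w = !b := by
            have : β w ≠ b := fun h => hsC ⟨(w, b), hwbC, h⟩
            rcases hb : β w <;> rcases b <;> simp_all
          set β' : V → Bool := Function.update β w b with hβ'
          have hβ'w : β' w = b := by simp [hβ']
          have hβ'ne : ∀ v, v ≠ w → β' v = β v := by
            intro v hv; simp [hβ', Function.update_of_ne hv]
          have hextq : Extends (restrict Y y) β' := by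
            intro v c hv
            simp only [restrict] at hv
            by_cases hvY : v ∈ Y
            · rw [hβ'ne v (fun h => hwY (h ▸ hvY))]
              have h1 : y v = c := by simpa [hvY] using hv
              have h2 : β v = y v := hext v (y v) (by simp [restrict, hvY])
              rw [h2, h1]
            · simp [hvY] at hv
          have hextr : Extends (singleAsn w b) β' := by
            intro v c hv
            simp only [singleAsn] at hv
            by_cases hvw : v = w
            · subst hvw
              simp at hv
              rw [hβ'w, hv]
            · simp [hvw] at hv
          have hsatFG : satCNF β' (F \ G) := by
            intro D hD
            rw [Finset.mem_sdiff] at hD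
            obtain ⟨hDF, hDG⟩ := hD
            by_cases hDC : D = C
            · exact ⟨(w, b), hDC ▸ hwbC, hβ'w⟩
            · obtain ⟨l, hl, hlsat⟩ := hsat D (Finset.mem_erase.2 ⟨hDC, hDF⟩)
              by_cases hlw : l.1 = w
              · by_cases hlb : l.2 = b
                · exact ⟨l, hl, by rw [hlw, hβ'w, hlb]⟩
                · have hl2 : l.2 = !b := by cases b <;> cases hll : l.2 <;> simp_all
                  have hlD : (w, !b) ∈ D := by
                    have : l = (w, !b) := Prod.ext hlw hl2
                    exact this ▸ hl
                  have hnres : ¬ resolvable w C D := by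
                    intro hr
                    exact hDG (Finset.mem_filter.2 ⟨hDF, hr⟩)
                  have : ∃ v e, v ≠ w ∧ (v, e) ∈ C ∧ (v, !e) ∈ D := by
                    by_contra hcon
                    push_neg at hcon
                    exact hnres ⟨⟨b, hwbC, hlD⟩,
                      fun v e hv h => hcon v e hv h.1 h.2⟩
                  obtain ⟨v, e, hvw, hvC, hvD⟩ := this
                  have hβv : β v = !e := by
                    have : β v ≠ e := fun h => hsC ⟨(v, e), hvC, h⟩
                    rcases hβ : β v <;> rcases e <;> simp_all
                  exact ⟨(v, !e), hvD, by rw [hβ'ne v hvw, hβv]⟩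
              · exact ⟨l, hl, by rw [hβ'ne l.1 hlw, hlsat]⟩
          have hdisj : ∀ v, restrict Y y v = none ∨ singleAsn w b v = none := by
            intro v
            by_cases hvY : v ∈ Y
            · right
              have : v ≠ w := fun h => hwY (h ▸ hvY)
              simp [singleAsn, this]
            · left; simp [restrict, hvY]
          have hrhs : satisfiable (cofCNF (restrict Y y)
              (cofCNF (singleAsn w b) (F \ G))) :=
            (sat_cof_cof_iff hdisj).2 ⟨β', hextq, hextr, hsatFG⟩
          have hlhs := (hes y).2 hrhs
          rw [← cofCNF_union,
            Finset.sdiff_union_of_subset (Finset.filter_subset _ F)] at hlhs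
          obtain ⟨γ, hγq, _, hγF⟩ := (sat_cof_cof_iff hdisj).1 hlhs
          exact ⟨γ, satCNF_cofCNF hγq hγF⟩
    refine ⟨?_, key⟩
    intro y
    have hFeq : F.erase C ∪ {C} = F := by
      rw [Finset.union_comm, ← Finset.insert_eq, Finset.insert_erase hC]
    rw [hFeq]
    exact key y
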